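/- Let G1, ..., Gn be independent standard Gumbel random variables and a1, ..., an real numbers. Then P(a1 + G1 ≥ max(a2 + G2, ..., an + Gn)) = exp(a1) / (exp(a1) + ... + exp(an)). -/

import Mathlib

open MeasureTheory ProbabilityTheory Real Filter Set


lemma exp_neg_le' (t : ℝ) (ht : 0 < t) : Real.exp (-t) ≤ 4 / t ^ 2 := by
  have h : t / 2 ≤ Real.exp (t / 2) := (Real.add_one_le_exp _).trans' (by linarith)
  have h2 : (t / 2) ^ 2 ≤ Real.exp (t / 2) ^ 2 := by
    apply pow_le_pow_left₀ (by positivity) h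
  rw [← Real.exp_nat_mul] at h2
  have h3 : t ^ 2 / 4 ≤ Real.exp t := by convert h2 using 2 <;> ring
  rw [Real.exp_neg, inv_le_comm₀ (Real.exp_pos t) (by positivity), inv_div]
  exact h3

lemma hasDerivAt_F (c x : ℝ) :
    HasDerivAt (fun x => Real.exp (-(c * Real.exp (-x))))
      (Real.exp (-x) * (c * Real.exp (-(c * Real.exp (-x))))) x := by
  have h1 : HasDerivAt (fun x : ℝ => -(c * Real.exp (-x))) (c * Real.exp (-x)) x := by
    have := ((Real.hasDerivAt_exp (-x)).comp x (hasDerivAt_neg x)).const_mul c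
    simpa using this.fun_neg
  have := (Real.hasDerivAt_exp (-(c * Real.exp (-x)))).comp x h1
  rw [show Real.exp (-x) * (c * Real.exp (-(c * Real.exp (-x)))) = Real.exp (-(c * Real.exp (-x))) * (c * Real.exp (-x)) by ring]
  exact this

lemma tendsto_F_atBot (c : ℝ) (hc : 0 < c) :
    Tendsto (fun x => Real.exp (-(c * Real.exp (-x)))) atBot (nhds 0) := by
  have h0 : Tendsto (fun x : ℝ => Real.exp (-x)) atBot atTop :=
    Real.tendsto_exp_atTop.comp tendsto_neg_atBot_atTop
  exact Real.tendsto_exp_atBot.comp (tendsto_neg_atTop_atBot.comp (h0.const_mul_atTop hc))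

lemma tendsto_F_atTop (c : ℝ) :
    Tendsto (fun x => Real.exp (-(c * Real.exp (-x)))) atTop (nhds 1) := by
  have h1 : Tendsto (fun x : ℝ => -(c * Real.exp (-x))) atTop (nhds 0) := by
    have := Real.tendsto_exp_atBot.comp (tendsto_neg_atTop_atBot (G := ℝ))
    simpa using (this.const_mul c).neg
  simpa [Function.comp_def] using (Real.continuous_exp.tendsto 0).comp h1

lemma integrable_h (c : ℝ) (hc : 0 < c) :
    Integrable (fun x => Real.exp (-x) * Real.exp (-(c * Real.exp (-x)))) := by
  have hmeas : Measurable fun x : ℝ => Real.exp (-x) * Real.exp (-(c * Real.exp (-x))) := by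
    fun_prop
  rw [← integrableOn_univ, ← Set.Iic_union_Ioi (a := (0:ℝ))]
  apply IntegrableOn.union
  · apply Integrable.mono' (g := fun x => 4 / c ^ 2 * Real.exp x)
      ((integrableOn_exp_Iic 0).const_mul _) hmeas.aestronglyMeasurable.restrict
    filter_upwards with x
    rw [Real.norm_of_nonneg (by positivity)]
    have h1 : Real.exp (-(c * Real.exp (-x))) ≤ 4 / (c * Real.exp (-x)) ^ 2 :=
      exp_neg_le' _ (by positivity)
    calc Real.exp (-x) * Real.exp (-(c * Real.exp (-x)))
        ≤ Real.exp (-x) * (4 / (c * Real.exp (-x)) ^ 2) :=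
          mul_le_mul_of_nonneg_left h1 (Real.exp_pos _).le
      _ = 4 / c ^ 2 * Real.exp x := by
          rw [mul_pow, ← Real.exp_nat_mul]
          have h : Real.exp ((2:ℕ) * -x) = Real.exp (-x) * Real.exp (-x) := by
            rw [← Real.exp_add]; push_cast; ring_nf
          rw [h]; field_simp [Real.exp_neg]; rw [← Real.exp_add]; simp
  · apply Integrable.mono' (exp_neg_integrableOn_Ioi 0 (by norm_num : (0:ℝ) < 1))
      hmeas.aestronglyMeasurable.restrict
    filter_upwards with x
    rw [Real.norm_of_nonneg (by positivity)]
    calc Real.exp (-x) * Real.exp (-(c * Real.exp (-x)))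
        ≤ Real.exp (-x) * 1 := by
          apply mul_le_mul_of_nonneg_left _ (Real.exp_pos _).le
          exact Real.exp_le_one_iff.2 (neg_nonpos.2 (by positivity))
      _ = Real.exp (-1 * x) := by rw [mul_one]; ring_nf

lemma integral_h (c : ℝ) (hc : 0 < c) :
    ∫ x, Real.exp (-x) * Real.exp (-(c * Real.exp (-x))) = 1 / c := by
  have hderiv : ∀ x : ℝ, HasDerivAt (fun x => c⁻¹ * Real.exp (-(c * Real.exp (-x))))
      (Real.exp (-x) * Real.exp (-(c * Real.exp (-x)))) x := by
    intro x
    have := (hasDerivAt_F c x).const_mul c⁻¹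
    rw [mul_left_comm, inv_mul_cancel_left₀ hc.ne'] at this
    exact this
  have := integral_of_hasDerivAt_of_tendsto hderiv (integrable_h c hc)
    (((tendsto_F_atBot c hc).const_mul c⁻¹))
    (((tendsto_F_atTop c).const_mul c⁻¹))
  simpa [one_div] using this

lemma integrableOn_gumbel_density (t : ℝ) :
    IntegrableOn (fun x => Real.exp (-(x + Real.exp (-x)))) (Set.Iic t) := by
  have : (fun x => Real.exp (-(x + Real.exp (-x))))
      = fun x => Real.exp (-x) * Real.exp (-(1 * Real.exp (-x))) := by
    funext x; rw [← Real.exp_add]; ring_nf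
  rw [this]
  exact (integrable_h 1 one_pos).integrableOn

lemma integral_Iic_gumbel_density (t : ℝ) :
    ∫ x in Set.Iic t, Real.exp (-(x + Real.exp (-x))) = Real.exp (-Real.exp (-t)) := by
  have hderiv : ∀ x ∈ Set.Iic t, HasDerivAt (fun x => Real.exp (-(1 * Real.exp (-x))))
      (Real.exp (-(x + Real.exp (-x)))) x := by
    intro x _
    have := hasDerivAt_F 1 x
    convert this using 1
    rw [one_mul, one_mul, ← Real.exp_add]; ring_nf
  have := integral_Iic_of_hasDerivAt_of_tendsto' hderiv
    (integrableOn_gumbel_density t) (tendsto_F_atBot 1 one_pos)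
  simpa using this


/-- The standard Gumbel distribution on `ℝ`, with density `exp (-(x + exp (-x)))`
(and CDF `x ↦ exp (-exp (-x))`). -/
noncomputable def gumbel : Measure ℝ :=
  volume.withDensity fun x => ENNReal.ofReal (Real.exp (-(x + Real.exp (-x))))


lemma gumbel_Iic (t : ℝ) :
    gumbel (Set.Iic t) = ENNReal.ofReal (Real.exp (-Real.exp (-t))) := by
  rw [gumbel, withDensity_apply _ measurableSet_Iic,
    ← ofReal_integral_eq_lintegral_ofReal (integrableOn_gumbel_density t)
      (Filter.Eventually.of_forall fun x => (Real.exp_pos _).le),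
    integral_Iic_gumbel_density]

instance : IsProbabilityMeasure gumbel := by
  constructor
  rw [gumbel, withDensity_apply _ MeasurableSet.univ, Measure.restrict_univ,
    ← ofReal_integral_eq_lintegral_ofReal ?hint
      (Filter.Eventually.of_forall fun x => (Real.exp_pos _).le)]
  case hint =>
    have : (fun x => Real.exp (-(x + Real.exp (-x))))
        = fun x => Real.exp (-x) * Real.exp (-(1 * Real.exp (-x))) := by
      funext x; rw [← Real.exp_add]; ring_nf
    rw [this]; exact integrable_h 1 one_pos
  have : (fun x => Real.exp (-(x + Real.exp (-x))))
      = fun x => Real.exp (-x) * Real.exp (-(1 * Real.exp (-x))) := by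
    funext x; rw [← Real.exp_add]; ring_nf
  rw [this, integral_h 1 one_pos]
  norm_num

theorem gumbel_max_n {Ω : Type*} [MeasureSpace Ω]
    [IsProbabilityMeasure (volume : Measure Ω)] (n : ℕ) (G : Fin (n + 1) → Ω → ℝ)
    (hG : ∀ i, Measurable (G i))
    (hindep : iIndepFun G volume)
    (hlaw : ∀ i, Measure.map (G i) volume = gumbel) (a : Fin (n + 1) → ℝ) :
    ((volume : Measure Ω) {ω | ∀ i, a i + G i ω ≤ a 0 + G 0 ω}).toReal
      = Real.exp (a 0) / ∑ i, Real.exp (a i) := by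
  classical
  have hGm : Measurable (fun ω i => G i ω) := measurable_pi_lambda _ hG
  have hmap : Measure.map (fun ω i => G i ω) volume = Measure.pi fun _ : Fin (n+1) => gumbel := by
    refine (Measure.pi_eq (μ := fun _ : Fin (n+1) => gumbel) fun s hs => ?_).symm
    rw [Measure.map_apply hGm (MeasurableSet.univ_pi hs)]
    have hpre : (fun ω i => G i ω) ⁻¹' Set.pi Set.univ s = ⋂ i, G i ⁻¹' s i := by
      ext ω; simp [Set.mem_pi]
    rw [hpre, hindep.meas_iInter (fun i => ⟨s i, hs i, rfl⟩)]
    exact Finset.prod_congr rfl fun i _ => by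
      rw [← hlaw i, Measure.map_apply (hG i) (hs i)]
  set A : Set (Fin (n+1) → ℝ) := {x | ∀ i, a i + x i ≤ a 0 + x 0} with hA
  have hAmeas : MeasurableSet A := by
    have : A = ⋂ i, {x : Fin (n+1) → ℝ | a i + x i ≤ a 0 + x 0} := by ext; simp [hA]
    rw [this]
    exact MeasurableSet.iInter fun i => measurableSet_le (by fun_prop) (by fun_prop)
  have hev : {ω | ∀ i, a i + G i ω ≤ a 0 + G 0 ω} = (fun ω i => G i ω) ⁻¹' A := rfl
  rw [hev, ← Measure.map_apply hGm hAmeas, hmap]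
  -- pass to product measure
  set e := MeasurableEquiv.piFinSuccAbove (fun _ : Fin (n+1) => ℝ) 0 with he
  have hmp := measurePreserving_piFinSuccAbove (fun _ : Fin (n+1) => gumbel) 0
  set B : Set (ℝ × (Fin n → ℝ)) := {p | ∀ j, a j.succ + p.2 j ≤ a 0 + p.1} with hBdef
  have hB : e.symm ⁻¹' A = B := by
    ext ⟨x, y⟩
    simp only [Set.mem_preimage, Set.mem_setOf_eq, he, hA, hBdef,
      MeasurableEquiv.piFinSuccAbove_symm_apply,
      Fin.insertNthEquiv_apply, Fin.forall_fin_succ, Fin.insertNth_apply_same]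
    have h : ∀ j : Fin n, Fin.insertNth (α := fun _ : Fin (n+1) => ℝ) 0 x y j.succ = y j := by
      intro j
      rw [← Fin.zero_succAbove j, Fin.insertNth_apply_succAbove]
    constructor
    · rintro ⟨-, h2⟩ j; rw [← h j]; exact h2 j
    · intro h2; exact ⟨le_refl _, fun j => by rw [h j]; exact h2 j⟩
  have hBmeas : MeasurableSet B := by
    rw [← hB]
    exact e.symm.measurable hAmeas
  have hApre : A = e ⁻¹' B := by
    rw [← hB, ← Set.preimage_comp]
    simp
  rw [hApre, hmp.measure_preimage hBmeas.nullMeasurableSet]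
  -- slice computation
  set S : ℝ := ∑ j : Fin n, Real.exp (a j.succ - a 0) with hSdef
  have hSnonneg : 0 ≤ S := Finset.sum_nonneg fun j _ => (Real.exp_pos _).le
  have hslice : ∀ x : ℝ, (Measure.pi fun _ : Fin n => gumbel) (Prod.mk x ⁻¹' B)
      = ENNReal.ofReal (Real.exp (-(S * Real.exp (-x)))) := by
    intro x
    have h1 : Prod.mk x ⁻¹' B = Set.pi Set.univ fun j : Fin n => Set.Iic (a 0 + x - a j.succ) := by
      ext y
      simp only [Set.mem_preimage, hBdef, Set.mem_setOf_eq, Set.mem_pi, Set.mem_univ,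
        forall_true_left, Set.mem_Iic]
      constructor <;> intro h j <;> linarith [h j]
    rw [h1, Measure.pi_pi]
    have h2 : ∀ j : Fin n, gumbel (Set.Iic (a 0 + x - a j.succ))
        = ENNReal.ofReal (Real.exp (-(Real.exp (a j.succ - a 0) * Real.exp (-x)))) := by
      intro j
      rw [gumbel_Iic]
      congr 2
      rw [← Real.exp_add]
      ring_nf
    simp_rw [h2]
    rw [← ENNReal.ofReal_prod_of_nonneg (fun j _ => (Real.exp_pos _).le)]
    congr 1
    rw [← Real.exp_sum]
    congr 1
    rw [hSdef, Finset.sum_mul, ← Finset.sum_neg_distrib]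
  rw [Measure.prod_apply hBmeas]
  simp_rw [hslice]
  -- gumbel lintegral
  have hc : (0:ℝ) < 1 + S := by linarith
  have hlint : ∫⁻ x, ENNReal.ofReal (Real.exp (-(S * Real.exp (-x)))) ∂gumbel
      = ENNReal.ofReal (1 / (1 + S)) := by
    rw [gumbel, lintegral_withDensity_eq_lintegral_mul _ (by fun_prop) (by fun_prop)]
    have : ∀ x : ℝ, (ENNReal.ofReal (Real.exp (-(x + Real.exp (-x))))
          * ENNReal.ofReal (Real.exp (-(S * Real.exp (-x)))))
        = ENNReal.ofReal (Real.exp (-x) * Real.exp (-((1 + S) * Real.exp (-x)))) := by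
      intro x
      rw [← ENNReal.ofReal_mul (Real.exp_pos _).le]
      congr 1
      rw [← Real.exp_add, ← Real.exp_add]
      ring_nf
    simp only [Pi.mul_apply]
    simp_rw [this]
    rw [← ofReal_integral_eq_lintegral_ofReal (integrable_h _ hc)
      (Filter.Eventually.of_forall fun x => by positivity), integral_h _ hc]
  rw [hlint]
  rw [ENNReal.toReal_ofReal (by positivity)]
  -- final arithmetic
  have hsum : ∑ i, Real.exp (a i) = Real.exp (a 0) * (1 + S) := by
    rw [Fin.sum_univ_succ, hSdef, mul_add, mul_one, Finset.mul_sum]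
    congr 1
    refine Finset.sum_congr rfl fun j _ => ?_
    rw [← Real.exp_add]
    ring_nf
  rw [hsum, one_div, eq_div_iff (by positivity)]
  field_simp
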